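/- Let C be a finite sequence of nodes each with cost +1 or -1. Then the hump decomposition of C contains O(√|C|) humps; more precisely, if the decomposition has n₁ N-humps (negative cost) and n₂ P-humps (nonnegative cost), then |C| ≥ n₁(n₁+1)/2 + n₂(n₂+1)/2, hence n₁ + n₂ ≤ 2√(2|C|). -/

import Mathlib

def cost (L : List ℤ) : ℤ := L.sum

def height (L : List ℤ) : ℤ :=
  ((List.range (L.length + 1)).map fun k => (L.take k).sum).foldr max 0

def fall (L : List ℤ) : ℤ := height L - cost L

/-- `H` is a hump: it has a useful peak at index `k`. -/
def IsHump (H : List ℤ) : Prop :=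
  H ≠ [] ∧ ∃ k < H.length,
    (∀ m < H.length, (H.take (m + 1)).sum ≤ (H.take (k + 1)).sum) ∧
    (∀ m < k, 0 ≤ (H.take (m + 1)).sum) ∧
    (∀ m, k < m → m < H.length → cost H ≤ (H.take (m + 1)).sum)

/-- The monotonicity property of a hump decomposition: for `H₁` preceding `H₂`,
N-humps come first, N-humps have strictly increasing heights, P-humps strictly
decreasing reverse heights. -/
def StdMono (H₁ H₂ : List ℤ) : Prop :=
  (0 ≤ cost H₁ → 0 ≤ cost H₂ ∧ fall H₂ < fall H₁) ∧
  (cost H₂ < 0 → cost H₁ < 0 ∧ height H₁ < height H₂)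

namespace HumpAux

lemma le_foldr_max (l : List ℤ) (x : ℤ) (hx : x ∈ l) : x ≤ l.foldr max 0 := by
  induction l with
  | nil => cases hx
  | cons a t ih =>
    rcases List.mem_cons.1 hx with rfl | h
    · exact le_max_left _ _
    · exact le_trans (ih h) (le_max_right _ _)

lemma foldr_max_mem (l : List ℤ) : l.foldr max 0 = 0 ∨ l.foldr max 0 ∈ l := by
  induction l with
  | nil => left; rfl
  | cons a t ih =>
    rcases le_total a (t.foldr max 0) with h | h
    · have hm : (a :: t).foldr max 0 = t.foldr max 0 := max_eq_right h
      rcases ih with h0 | hmm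
      · left; rw [hm, h0]
      · right; rw [hm]; exact List.mem_cons_of_mem a hmm
    · right
      have hm : (a :: t).foldr max 0 = a := max_eq_left h
      rw [hm]; exact List.mem_cons_self

lemma foldr_max_nonneg (l : List ℤ) : 0 ≤ l.foldr max 0 := by
  induction l with
  | nil => exact le_refl 0
  | cons a t ih => exact le_trans ih (le_max_right _ _)

lemma take_sum_le_height (L : List ℤ) (k : ℕ) (hk : k ≤ L.length) :
    (L.take k).sum ≤ height L := by
  apply le_foldr_max
  exact List.mem_map.2 ⟨k, List.mem_range.2 (by omega), rfl⟩

lemma height_nonneg (L : List ℤ) : 0 ≤ height L := foldr_max_nonneg _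

lemma height_eq_take (L : List ℤ) : ∃ k ≤ L.length, height L = (L.take k).sum := by
  rcases foldr_max_mem ((List.range (L.length + 1)).map fun k => (L.take k).sum) with h0 | hm
  · exact ⟨0, Nat.zero_le _, by simpa [height] using h0⟩
  · rcases List.mem_map.1 hm with ⟨k, hk, hEq⟩
    refine ⟨k, ?_, by simpa [height] using hEq.symm⟩
    have := List.mem_range.1 hk; omega

lemma sum_le_len (l : List ℤ) (h : ∀ x ∈ l, x ≤ 1) : l.sum ≤ (l.length : ℤ) := by
  induction l with
  | nil => simp
  | cons a t ih =>
    have := h a (List.mem_cons_self)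
    have := ih (fun x hx => h x (List.mem_cons_of_mem a hx))
    simp only [List.sum_cons, List.length_cons]
    push_cast
    omega

lemma neg_len_le_sum (l : List ℤ) (h : ∀ x ∈ l, -1 ≤ x) : -(l.length : ℤ) ≤ l.sum := by
  induction l with
  | nil => simp
  | cons a t ih =>
    have := h a (List.mem_cons_self)
    have := ih (fun x hx => h x (List.mem_cons_of_mem a hx))
    simp only [List.sum_cons, List.length_cons]
    push_cast
    omega

lemma height_le_cost (L : List ℤ) : cost L ≤ height L := by
  simpa [cost] using take_sum_le_height L L.length (le_refl _)

lemma key_len (L : List ℤ) (hL : ∀ x ∈ L, x = 1 ∨ x = -1) :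
    2 * height L - cost L ≤ (L.length : ℤ) := by
  obtain ⟨k, hk, hEq⟩ := height_eq_take L
  have h1 : (L.take k).sum ≤ ((L.take k).length : ℤ) :=
    sum_le_len _ (fun x hx => by rcases hL x (List.mem_of_mem_take hx) with h | h <;> omega)
  have h2 : -(((L.drop k).length : ℤ)) ≤ (L.drop k).sum :=
    neg_len_le_sum _ (fun x hx => by rcases hL x (List.mem_of_mem_drop hx) with h | h <;> omega)
  have h3 : (L.take k).sum + (L.drop k).sum = cost L := by
    rw [← List.sum_append, List.take_append_drop]; rfl
  have h4 : (L.take k).length + (L.drop k).length = L.length := by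
    rw [List.length_take, List.length_drop]; omega
  have h5 : ((L.take k).length : ℤ) + ((L.drop k).length : ℤ) = (L.length : ℤ) := by
    exact_mod_cast h4
  omega

/-- elements of a strictly increasing list of nonneg ints grow at least linearly -/
lemma mono_ge (l : List ℤ) (c : ℤ) (hp : l.Pairwise (· < ·)) (hc : ∀ x ∈ l, c ≤ x) :
    ∀ i (h : i < l.length), c + i ≤ l.get ⟨i, h⟩ := by
  induction l generalizing c with
  | nil => intro i h; simp at h
  | cons a t ih =>
    intro i h
    rcases List.pairwise_cons.1 hp with ⟨ha, ht⟩
    cases i with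
    | zero => simpa using hc a (List.mem_cons_self)
    | succ j =>
      have hj : j < t.length := by simpa using h
      have := ih (a + 1) ht (fun x hx => by have := ha x hx; omega) j hj
      have hca : c ≤ a := hc a (List.mem_cons_self)
      simp only [List.get_cons_succ]
      push_cast
      omega

/-- triangular bound -/
lemma tri (l : List ℕ) (h : ∀ i (hi : i < l.length), i + 1 ≤ l.get ⟨i, hi⟩) :
    l.length * (l.length + 1) ≤ 2 * l.sum := by
  suffices H : ∀ (l : List ℕ) (c : ℕ), (∀ i (hi : i < l.length), c + i + 1 ≤ l.get ⟨i, hi⟩) →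
      l.length * (2 * c + l.length + 1) ≤ 2 * l.sum by
    simpa using H l 0 (by simpa using h)
  intro l
  induction l with
  | nil => intro c _; simp
  | cons a t ih =>
    intro c hc
    have ha : c + 1 ≤ a := by simpa using hc 0 (by simp)
    have ht : ∀ i (hi : i < t.length), (c + 1) + i + 1 ≤ t.get ⟨i, hi⟩ := by
      intro i hi
      have := hc (i + 1) (by simpa using Nat.succ_lt_succ hi)
      simpa [Nat.add_assoc, Nat.add_comm, Nat.add_left_comm] using this
    have := ih (c + 1) ht
    simp only [List.length_cons, List.sum_cons]
    nlinarith [this, ha]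

end HumpAux

namespace HumpAux

lemma sum_split (l : List (List ℤ)) (p : List ℤ → Bool) (f : List ℤ → ℕ) :
    ((l.filter p).map f).sum + ((l.filter fun a => !p a).map f).sum = (l.map f).sum := by
  induction l with
  | nil => simp
  | cons a t ih =>
    by_cases h : p a <;> simp [List.filter_cons, h, ← ih] <;> omega

lemma N_bound (l : List (List ℤ)) (h1 : ∀ H ∈ l, ∀ x ∈ H, x = 1 ∨ x = -1)
    (h2 : ∀ H ∈ l, cost H < 0)
    (h3 : l.Pairwise fun a b => height a < height b) :
    l.length * (l.length + 1) ≤ 2 * (l.map List.length).sum := by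
  have := tri (l.map List.length) ?_
  · simpa using this
  intro i hi
  have hi' : i < l.length := by simpa using hi
  set H := l.get ⟨i, hi'⟩ with hH
  have hmem : H ∈ l := l.get_mem _
  have hht : (i : ℤ) ≤ height H := by
    have hp : (l.map height).Pairwise (· < ·) := List.pairwise_map.2 h3
    have hnn : ∀ x ∈ l.map height, (0:ℤ) ≤ x := by
      intro x hx
      rcases List.mem_map.1 hx with ⟨G, _, rfl⟩
      exact height_nonneg G
    have := mono_ge (l.map height) 0 hp hnn i (by simpa using hi')
    simpa [List.getElem_map, hH] using this
  have hkey := key_len H (h1 H hmem)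
  have hcost := h2 H hmem
  have : ((l.map List.length).get ⟨i, hi⟩ : ℕ) = H.length := by
    simp [List.getElem_map, hH]
  rw [this]
  omega

lemma P_bound (l : List (List ℤ)) (h1 : ∀ H ∈ l, ∀ x ∈ H, x = 1 ∨ x = -1)
    (h2 : ∀ H ∈ l, 0 ≤ cost H) (hne : ∀ H ∈ l, H ≠ [])
    (h3 : l.Pairwise fun a b => fall a < fall b) :
    l.length * (l.length + 1) ≤ 2 * (l.map List.length).sum := by
  have := tri (l.map List.length) ?_
  · simpa using this
  intro i hi
  have hi' : i < l.length := by simpa using hi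
  set H := l.get ⟨i, hi'⟩ with hH
  have hmem : H ∈ l := l.get_mem _
  have hft : (i : ℤ) ≤ fall H := by
    have hp : (l.map fall).Pairwise (· < ·) := List.pairwise_map.2 h3
    have hnn : ∀ x ∈ l.map fall, (0:ℤ) ≤ x := by
      intro x hx
      rcases List.mem_map.1 hx with ⟨G, _, rfl⟩
      have := height_le_cost G
      simp only [fall]; omega
    have := mono_ge (l.map fall) 0 hp hnn i (by simpa using hi')
    simpa [List.getElem_map, hH] using this
  have hkey := key_len H (h1 H hmem)
  have hcost := h2 H hmem
  have hlen1 : 1 ≤ H.length := List.length_pos_iff.2 (hne H hmem)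
  have hfd : fall H = height H - cost H := rfl
  have : ((l.map List.length).get ⟨i, hi⟩ : ℕ) = H.length := by
    simp [List.getElem_map, hH]
  rw [this]
  omega

end HumpAux

open HumpAux in
theorem num_humps_le_sqrt (C : List ℤ) (hC : ∀ x ∈ C, x = 1 ∨ x = -1)
    (D : List (List ℤ)) (hjoin : D.flatten = C)
    (hhump : ∀ H ∈ D, IsHump H)
    (hmono : D.Pairwise StdMono)
    (n₁ n₂ : ℕ)
    (hn₁ : n₁ = (D.filter fun H => decide (cost H < 0)).length)
    (hn₂ : n₂ = (D.filter fun H => decide (0 ≤ cost H)).length) :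
    n₁ * (n₁ + 1) / 2 + n₂ * (n₂ + 1) / 2 ≤ C.length ∧
    (n₁ + n₂ : ℝ) ≤ 2 * Real.sqrt (2 * C.length) := by
  set DN := D.filter fun H => decide (cost H < 0) with hDN
  set DP := D.filter fun H => decide (0 ≤ cost H) with hDP
  have hD1 : ∀ H ∈ D, ∀ x ∈ H, x = 1 ∨ x = -1 := by
    intro H hH x hx
    exact hC x (hjoin ▸ List.mem_flatten.2 ⟨H, hH, hx⟩)
  -- facts about DN
  have hNmem : ∀ H ∈ DN, H ∈ D ∧ cost H < 0 := by
    intro H hH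
    rcases List.mem_filter.1 hH with ⟨h1, h2⟩
    exact ⟨h1, of_decide_eq_true h2⟩
  have hNpair : DN.Pairwise fun a b => height a < height b := by
    refine (hmono.filter _).imp_of_mem (fun {a b} ha hb hr => ?_)
    exact (hr.2 (hNmem b hb).2).2
  have hN := N_bound DN (fun H hH => hD1 H (hNmem H hH).1) (fun H hH => (hNmem H hH).2) hNpair
  -- facts about DP
  have hPmem : ∀ H ∈ DP, H ∈ D ∧ 0 ≤ cost H := by
    intro H hH
    rcases List.mem_filter.1 hH with ⟨h1, h2⟩
    exact ⟨h1, of_decide_eq_true h2⟩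
  have hPpair : DP.reverse.Pairwise fun a b => fall a < fall b := by
    rw [List.pairwise_reverse]
    refine (hmono.filter _).imp_of_mem (fun {a b} ha hb hr => ?_)
    exact (hr.1 (hPmem a ha).2).2
  have hP := P_bound DP.reverse
    (fun H hH => hD1 H (hPmem H (List.mem_reverse.1 hH)).1)
    (fun H hH => (hPmem H (List.mem_reverse.1 hH)).2)
    (fun H hH => (hhump H (hPmem H (List.mem_reverse.1 hH)).1).1)
    hPpair
  have hPlen : DP.reverse.length = DP.length := List.length_reverse
  have hPsum : (DP.reverse.map List.length).sum = (DP.map List.length).sum := by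
    rw [List.map_reverse, List.sum_reverse]
  rw [hPlen, hPsum] at hP
  -- sum split
  have hsplit : ((DN.map List.length).sum + (DP.map List.length).sum) = (D.map List.length).sum := by
    have hcongr : DP = D.filter fun a => !(decide (cost a < 0)) := by
      apply List.filter_congr
      intro H _
      by_cases h : cost H < 0 <;> simp [h] <;> omega
    rw [hDN, hcongr]
    exact sum_split D _ List.length
  have htot : (D.map List.length).sum = C.length := by
    rw [← hjoin, List.length_flatten]
  -- combine
  have hn1 : n₁ * (n₁ + 1) ≤ 2 * (DN.map List.length).sum := by rw [hn₁]; exact hN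
  have hn2 : n₂ * (n₂ + 1) ≤ 2 * (DP.map List.length).sum := by rw [hn₂]; exact hP
  have hmain : n₁ * (n₁ + 1) + n₂ * (n₂ + 1) ≤ 2 * C.length := by omega
  have he1 : Even (n₁ * (n₁ + 1)) := Nat.even_mul_succ_self n₁
  have he2 : Even (n₂ * (n₂ + 1)) := Nat.even_mul_succ_self n₂
  obtain ⟨r1, hr1⟩ := he1
  obtain ⟨r2, hr2⟩ := he2
  constructor
  · omega
  · have hsq : n₁ * n₁ + n₂ * n₂ ≤ 2 * C.length := by nlinarith
    have hx2 : ((n₁ : ℝ) + n₂) ^ 2 ≤ 8 * C.length := by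
      have : ((n₁ : ℝ)) * n₁ + (n₂ : ℝ) * n₂ ≤ 2 * C.length := by exact_mod_cast hsq
      nlinarith [sq_nonneg ((n₁ : ℝ) - n₂)]
    have hs : Real.sqrt (2 * C.length) * Real.sqrt (2 * C.length) = 2 * C.length :=
      Real.mul_self_sqrt (by positivity)
    nlinarith [Real.sqrt_nonneg (2 * (C.length : ℝ)), hx2, hs,
      sq_nonneg ((n₁ : ℝ) + n₂ - 2 * Real.sqrt (2 * C.length)),
      Nat.cast_nonneg (α := ℝ) n₁, Nat.cast_nonneg (α := ℝ) n₂]
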